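/- For any compact set K ⊂ ℝ^d and δ > 0, let K^{2δ} := { x ∈ ℝ^d : ‖x−y‖₂ ≤ 2δ for some y ∈ K }. There exists a continuously differentiable function v : ℝ^d → [0,1] such that v(x) = 1 for all x ∈ K, v(x) = 0 for all x ∉ K^{2δ}, and ‖∇v(x)‖₂ ≤ (δ^{−1} d θ_{d−1} / θ_d) · 1{x ∈ K^{2δ} \ K} for all x, where θ_d := d ∫_0^1 exp(−1/(1−r²)) r^{d−1} dr for d > 0 and θ_0 := e^{−1}. -/

import Mathlib

open MeasureTheory Filter Real
open scoped BigOperators RealInnerProductSpace FourierTransform ENNReal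

noncomputable section

/-- `E d` is the Euclidean space `ℝ^d`. -/
abbrev E (d : ℕ) : Type := EuclideanSpace ℝ (Fin d)

/-- The `j`-th standard basis vector of `ℝ^d`. -/
def esingle (d : ℕ) (j : Fin d) : E d := EuclideanSpace.single j (1 : ℝ)

/-- Partial derivative in the `j`-th coordinate of the first argument of a bivariate kernel. -/
def Dx {d : ℕ} (j : Fin d) (k : E d → E d → ℝ) : E d → E d → ℝ :=
  fun x y => fderiv ℝ (fun z => k z y) x (esingle d j)

/-- Partial derivative in the `j`-th coordinate of the second argument of a bivariate kernel. -/
def Dy {d : ℕ} (j : Fin d) (k : E d → E d → ℝ) : E d → E d → ℝ :=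
  fun x y => fderiv ℝ (fun z => k x z) y (esingle d j)

/-- A reproducing kernel Hilbert space of real-valued functions on `ℝ^d`, presented via its
membership predicate, inner product and reproducing kernel. -/
structure RKHSd (d : ℕ) where
  mem : (E d → ℝ) → Prop
  inner : (E d → ℝ) → (E d → ℝ) → ℝ
  kernel : E d → E d → ℝ
  mem_zero : mem 0
  mem_add : ∀ f g, mem f → mem g → mem (f + g)
  mem_smul : ∀ (c : ℝ) f, mem f → mem (c • f)
  inner_symm : ∀ f g, inner f g = inner g f
  inner_add_left : ∀ f g h, inner (f + g) h = inner f h + inner g h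
  inner_smul_left : ∀ (c : ℝ) f g, inner (c • f) g = c * inner f g
  inner_self_nonneg : ∀ f, 0 ≤ inner f f
  inner_self_eq_zero : ∀ f, mem f → inner f f = 0 → f = 0
  kernel_mem : ∀ x, mem (kernel x)
  reproducing : ∀ f, mem f → ∀ x, f x = inner f (kernel x)

/-- The RKHS norm. -/
def RKHSd.norm {d : ℕ} (H : RKHSd d) (f : E d → ℝ) : ℝ := Real.sqrt (H.inner f f)

/-- The Langevin Stein operator `(T_P g)(x) = ⟨g(x), b(x)⟩ + ∑_j ∂_{x_j} g_j(x)`, applied to a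
function given by its components `g : Fin d → E d → ℝ`. -/
def TP {d : ℕ} (b : E d → E d) (g : Fin d → E d → ℝ) (x : E d) : ℝ :=
  (∑ j, g j x * b x j) + ∑ j, fderiv ℝ (g j) x (esingle d j)

/-- The Langevin Stein operator applied to a vector field `g : ℝ^d → ℝ^d`. -/
def TPv {d : ℕ} (b : E d → E d) (g : E d → E d) (x : E d) : ℝ :=
  ⟪g x, b x⟫ + ∑ j, fderiv ℝ (fun z => g z j) x (esingle d j)

/-- The kernel Stein set `G_k` for the Euclidean (`ℓ²`) norm. -/
def SteinSet {d : ℕ} (H : RKHSd d) : Set (Fin d → E d → ℝ) :=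
  {g | (∀ j, H.mem (g j)) ∧ (∑ j, (H.norm (g j)) ^ 2) ≤ 1}

/-- The kernel Stein discrepancy `S(μ) = sup_{g ∈ G_k} |E_μ[(T_P g)(X)]|`. -/
def KSD {d : ℕ} (H : RKHSd d) (b : E d → E d) (μ : Measure (E d)) : ℝ :=
  ⨆ g : SteinSet H, |∫ x, TP b g.1 x ∂μ|

/-- The dual norm `‖v‖* = sup_{N(a) = 1} ⟨a, v⟩` of a norm `N` on `ℝ^d`. -/
def dualNorm {d : ℕ} (N : E d → ℝ) (v : E d) : ℝ :=
  sSup {s | ∃ a : E d, N a = 1 ∧ s = ⟪v, a⟫}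

/-- `N` is a norm on `ℝ^d`. -/
def IsNorm {d : ℕ} (N : E d → ℝ) : Prop :=
  (∀ x, 0 ≤ N x) ∧ (∀ x, N x = 0 ↔ x = 0) ∧
    (∀ x y, N (x + y) ≤ N x + N y) ∧ ∀ (c : ℝ) x, N (c • x) = |c| * N x

/-- The kernel Stein set `G_{k, ‖·‖}` for a general norm `N` on `ℝ^d`. -/
def SteinSetN {d : ℕ} (H : RKHSd d) (N : E d → ℝ) : Set (Fin d → E d → ℝ) :=
  {g | (∀ j, H.mem (g j)) ∧ dualNorm N (WithLp.toLp 2 (fun j => H.norm (g j))) ≤ 1}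

/-- The kernel Stein discrepancy based on the Stein set `G_{k, ‖·‖}`. -/
def KSDN {d : ℕ} (H : RKHSd d) (N : E d → ℝ) (b : E d → E d) (μ : Measure (E d)) : ℝ :=
  ⨆ g : SteinSetN H N, |∫ x, TP b g.1 x ∂μ|

/-- The Stein kernel
`k_0^j(x,y) = b_j(x)b_j(y)k(x,y) + b_j(x)∂_{y_j}k(x,y) + b_j(y)∂_{x_j}k(x,y) + ∂_{x_j}∂_{y_j}k(x,y)`. -/
def steinKernel {d : ℕ} (b : E d → E d) (k : E d → E d → ℝ) (j : Fin d) (x y : E d) : ℝ :=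
  b x j * b y j * k x y + b x j * Dy j k x y + b y j * Dx j k x y + Dx j (Dy j k) x y

/-- `k ∈ C^{(1,1)}`: `k` and all mixed partials `∂_{x_i}∂_{y_j} k` are continuous. -/
def C11 {d : ℕ} (k : E d → E d → ℝ) : Prop :=
  Continuous (fun q : E d × E d => k q.1 q.2) ∧
    ∀ i j : Fin d, Continuous fun q : E d × E d => Dx i (Dy j k) q.1 q.2

/-- `k ∈ C_b^{(1,1)}`: `k` and all mixed partials `∂_{x_i}∂_{y_j} k` are continuous and bounded. -/
def Cb11 {d : ℕ} (k : E d → E d → ℝ) : Prop :=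
  C11 k ∧ (∃ C, ∀ x y, |k x y| ≤ C) ∧
    ∀ i j : Fin d, ∃ C, ∀ x y, |Dx i (Dy j k) x y| ≤ C

/-- `k ∈ C_b^{(2,2)}`. -/
def Cb22 {d : ℕ} (k : E d → E d → ℝ) : Prop :=
  Cb11 k ∧ ∀ i₁ i₂ j₁ j₂ : Fin d,
    Continuous (fun q : E d × E d => Dx i₁ (Dx i₂ (Dy j₁ (Dy j₂ k))) q.1 q.2) ∧
      ∃ C, ∀ x y, |Dx i₁ (Dx i₂ (Dy j₁ (Dy j₂ k))) x y| ≤ C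

/-- `k ∈ C_0^{(1,1)}`: `k` and all mixed partials are continuous and vanishing at infinity. -/
def C011 {d : ℕ} (k : E d → E d → ℝ) : Prop :=
  C11 k ∧ Tendsto (fun q : E d × E d => k q.1 q.2) (cocompact _) (nhds 0) ∧
    ∀ i j : Fin d, Tendsto (fun q : E d × E d => Dx i (Dy j k) q.1 q.2) (cocompact _) (nhds 0)

/-- The score function `b = ∇ log p`. -/
def score {d : ℕ} (p : E d → ℝ) : E d → E d := fun x => gradient (fun z => Real.log (p z)) x

/-- `κ(r) = inf { -2⟨b(x)-b(y), x-y⟩/‖x-y‖² : ‖x-y‖ = r }`. -/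
def kappaFn {d : ℕ} (b : E d → E d) (r : ℝ) : ℝ :=
  sInf {s | ∃ x y : E d, ‖x - y‖ = r ∧ s = -2 * ⟪b x - b y, x - y⟫ / ‖x - y‖ ^ 2}

/-- Distant dissipativity: `κ_0 = liminf_{r → ∞} κ(r) > 0`. -/
def DistantlyDissipative {d : ℕ} (b : E d → E d) : Prop :=
  0 < liminf (fun r => kappaFn b r) atTop

/-- `f` is Lipschitz. -/
def LipschitzFn {d : ℕ} {α : Type*} [NormedAddCommGroup α] (f : E d → α) : Prop :=
  ∃ L : ℝ, 0 ≤ L ∧ ∀ x y, ‖f x - f y‖ ≤ L * ‖x - y‖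

/-- Membership of a target (given by its score `b`) in the class `𝒫` of distantly dissipative
distributions with Lipschitz score. -/
def InP {d : ℕ} (b : E d → E d) : Prop := DistantlyDissipative b ∧ LipschitzFn b

/-- Weak convergence of a sequence of measures to `P`. -/
def WeakConvTo {d : ℕ} (μ : ℕ → Measure (E d)) (P : Measure (E d)) : Prop :=
  ∀ f : BoundedContinuousFunction (E d) ℝ,
    Tendsto (fun m => ∫ x, f x ∂μ m) atTop (nhds (∫ x, f x ∂P))

/-- Uniform tightness of a sequence of measures. -/
def UnifTight {d : ℕ} (μ : ℕ → Measure (E d)) : Prop :=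
  ∀ ε : ℝ, 0 < ε → ∃ R : ℝ, limsup (fun m => μ m {x | R < ‖x‖}) atTop ≤ ENNReal.ofReal ε

/-- `M_0(f) = sup_x ‖f(x)‖`. -/
def M0 {d : ℕ} {α : Type*} [NormedAddCommGroup α] (f : E d → α) : ℝ :=
  sSup {s | ∃ x, s = ‖f x‖}

/-- `M_1(f) = sup_{x ≠ y} ‖f(x) - f(y)‖/‖x - y‖`. -/
def M1 {d : ℕ} {α : Type*} [NormedAddCommGroup α] (f : E d → α) : ℝ :=
  sSup {s | ∃ x y, x ≠ y ∧ s = ‖f x - f y‖ / ‖x - y‖}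

/-- `M_2(g) = sup_{x ≠ y} ‖∇g(x) - ∇g(y)‖_op/‖x - y‖`. -/
def M2 {d : ℕ} (g : E d → E d) : ℝ :=
  sSup {s | ∃ x y, x ≠ y ∧ s = ‖fderiv ℝ g x - fderiv ℝ g y‖ / ‖x - y‖}

/-- The L¹-Wasserstein distance, via couplings. -/
def Wass {d : ℕ} (μ ν : Measure (E d)) : ℝ :=
  sInf {s | ∃ Pi : Measure (E d × E d),
    Pi.map Prod.fst = μ ∧ Pi.map Prod.snd = ν ∧ s = ∫ q, ‖q.1 - q.2‖ ∂Pi}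

/-- The bounded Lipschitz (Dudley) metric. -/
def dBL {d : ℕ} (μ ν : Measure (E d)) : ℝ :=
  sSup {s | ∃ h : E d → ℝ, M0 h + M1 h ≤ 1 ∧ s = |(∫ x, h x ∂μ) - ∫ x, h x ∂ν|}

/-- The tightness rate `R(μ, ε) = inf { r ≥ 0 : μ(‖X‖ > r) ≤ ε }`. -/
def tightRate {d : ℕ} (μ : Measure (E d)) (ε : ℝ) : ℝ :=
  sInf {r | 0 ≤ r ∧ μ {x | r < ‖x‖} ≤ ENNReal.ofReal ε}

/-- `θ_d = d ∫_0^1 exp(-1/(1-r²)) r^{d-1} dr` for `d > 0`, and `θ_0 = e⁻¹`. -/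
def theta (d : ℕ) : ℝ :=
  if d = 0 then Real.exp (-1)
  else d * ∫ r in (0:ℝ)..1, Real.exp (-1 / (1 - r ^ 2)) * r ^ (d - 1)

/-- The volume of the unit Euclidean ball in `ℝ^d`. -/
def Vball (d : ℕ) : ℝ := (volume (Metric.ball (0 : E d) 1)).toReal

/-- `Φhat` is a generalized Fourier transform of `Φ` of order `m`: for every Schwartz test
function `γ` whose derivatives of order `< 2m` vanish at the origin,
`∫ Φ(x) γ̂(x) dx = ∫ Φhat(ω) γ(ω) dω`. -/
def IsGenFT {d : ℕ} (m : ℕ) (Φ Φhat : E d → ℝ) : Prop :=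
  ∀ γ : SchwartzMap (E d) ℂ, (∀ n : ℕ, n < 2 * m → iteratedFDeriv ℝ n (⇑γ) 0 = 0) →
    ∫ x, (Φ x : ℂ) * 𝓕 (⇑γ) x = ∫ ω, (Φhat ω : ℂ) * γ ω

/-- `F(t) = sup_{‖ω‖_∞ ≤ t} Φhat(ω)⁻¹`. -/
def Fsup {d : ℕ} (Φhat : E d → ℝ) (t : ℝ) : ℝ :=
  sSup {s | ∃ ω : E d, (∀ j, |ω j| ≤ t) ∧ s = (Φhat ω)⁻¹}

/-- The standard Gaussian density on `ℝ^d`. -/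
def gaussDensity (d : ℕ) : E d → ℝ := fun x => (2 * π) ^ (-(d : ℝ) / 2) * Real.exp (-‖x‖ ^ 2 / 2)

/-- The standard Gaussian measure `N(0, I_d)` on `ℝ^d`. -/
def stdGaussian (d : ℕ) : Measure (E d) :=
  volume.withDensity fun x => ENNReal.ofReal (gaussDensity d x)

/-- `‖∇_x k(x,y)‖₂`. -/
def gradX {d : ℕ} (k : E d → E d → ℝ) (x y : E d) : ℝ := Real.sqrt (∑ i, (Dx i k x y) ^ 2)

/-- `⟨∇_x, ∇_y k(x,y)⟩ = ∑_i ∂_{x_i}∂_{y_i} k(x,y)`. -/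
def mixedTrace {d : ℕ} (k : E d → E d → ℝ) (x y : E d) : ℝ := ∑ i, Dx i (Dy i k) x y

/-- Kernel decay rate
`γ(r) = sup { max(|k(x,y)|, ‖∇_x k(x,y)‖₂, |⟨∇_x, ∇_y k(x,y)⟩|) : ‖x-y‖₂ ≥ r }`. -/
def decayRate {d : ℕ} (k : E d → E d → ℝ) (r : ℝ) : ℝ :=
  sSup {s | ∃ x y : E d, r ≤ ‖x - y‖ ∧ s = max |k x y| (max (gradX k x y) |mixedTrace k x y|)}

/-- The Stein discrepancy over an arbitrary family `G` of vector fields. -/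
def SDisc {d : ℕ} (b : E d → E d) (G : Set (E d → E d)) (μ : Measure (E d)) : ℝ :=
  ⨆ g : G, |∫ x, TPv b g.1 x ∂μ|

open scoped Convolution
open Metric InnerProductSpace

lemma theta_integrand_integrable (n : ℕ) :
    IntervalIntegrable (fun r : ℝ => Real.exp (-1 / (1 - r ^ 2)) * r ^ n) volume 0 1 := by
  rw [intervalIntegrable_iff]
  have hm : AEStronglyMeasurable (fun r : ℝ => Real.exp (-1 / (1 - r ^ 2)) * r ^ n) volume := by
    apply Measurable.aestronglyMeasurable
    exact (Real.measurable_exp.comp ((measurable_const.div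
      (measurable_const.sub (measurable_id.pow_const 2))))).mul (measurable_id.pow_const n)
  apply MeasureTheory.Measure.integrableOn_of_bounded (M := 1)
  · rw [Set.uIoc_of_le (zero_le_one (α := ℝ))]
    simp
  · exact hm
  · rw [Set.uIoc_of_le (zero_le_one (α := ℝ))]
    filter_upwards [ae_restrict_mem measurableSet_Ioc] with r hr
    have h0 : (0:ℝ) < r := hr.1
    have h1 : r ≤ 1 := hr.2
    have hsq : (0:ℝ) ≤ 1 - r ^ 2 := by nlinarith
    have hexp : Real.exp (-1 / (1 - r ^ 2)) ≤ 1 := by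
      apply Real.exp_le_one_iff.2
      exact div_nonpos_of_nonpos_of_nonneg (by norm_num) hsq
    have hpow : r ^ n ≤ 1 := pow_le_one₀ h0.le h1
    have : |Real.exp (-1 / (1 - r ^ 2)) * r ^ n| = Real.exp (-1 / (1 - r ^ 2)) * r ^ n := by
      exact abs_of_nonneg (mul_nonneg (Real.exp_pos _).le (pow_nonneg h0.le n))
    rw [Real.norm_eq_abs, this]
    calc Real.exp (-1 / (1 - r ^ 2)) * r ^ n ≤ 1 * 1 := by
          exact mul_le_mul hexp hpow (pow_nonneg h0.le n) zero_le_one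
      _ = 1 := by norm_num

lemma theta_integral_pos (n : ℕ) :
    0 < ∫ r in (0:ℝ)..1, Real.exp (-1 / (1 - r ^ 2)) * r ^ n := by
  apply intervalIntegral.intervalIntegral_pos_of_pos_on (theta_integrand_integrable n)
  · intro x hx
    exact mul_pos (Real.exp_pos _) (pow_pos hx.1 n)
  · norm_num

lemma theta_pos (d : ℕ) : 0 < theta d := by
  rcases d with _ | n
  · simpa [theta] using Real.exp_pos (-1)
  · rw [theta]
    simp only [Nat.succ_ne_zero, if_false]
    exact mul_pos (by positivity) (theta_integral_pos n)

lemma theta_le (d : ℕ) (hd : 1 ≤ d) : theta d ≤ d * theta (d - 1) := by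
  rcases d with _ | n
  · omega
  rcases n with _ | m
  · -- d = 1
    rw [theta, theta]
    norm_num
    have : (∫ r in (0:ℝ)..1, Real.exp (-1 / (1 - r ^ 2)) * r ^ 0)
        ≤ ∫ r in (0:ℝ)..1, Real.exp (-1) := by
      apply intervalIntegral.integral_mono_ae_restrict zero_le_one
        (theta_integrand_integrable 0) (by simp [intervalIntegrable_const])
      have hne : ∀ᵐ r ∂(volume.restrict (Set.Icc (0:ℝ) 1)), r ≠ 1 := by
        rw [ae_iff]
        have : {r : ℝ | ¬ r ≠ 1} = {1} := by ext r; simp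
        rw [this, Measure.restrict_apply (measurableSet_singleton 1)]
        exact measure_mono_null Set.inter_subset_left Real.volume_singleton
      filter_upwards [hne, ae_restrict_mem measurableSet_Icc] with r hr hrm
      have h1 : r < 1 := lt_of_le_of_ne hrm.2 hr
      have h0 : (0:ℝ) ≤ r := hrm.1
      have hsq : (0:ℝ) < 1 - r ^ 2 := by nlinarith
      have : -1 / (1 - r ^ 2) ≤ -1 := by
        rw [div_le_iff₀ hsq]; nlinarith
      simpa using Real.exp_le_exp.2 this
    simpa using this
  · -- d = m + 2
    rw [theta, theta]
    simp only [Nat.succ_ne_zero, if_false, Nat.add_sub_cancel]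
    have hI : (∫ r in (0:ℝ)..1, Real.exp (-1 / (1 - r ^ 2)) * r ^ (m + 1))
        ≤ ∫ r in (0:ℝ)..1, Real.exp (-1 / (1 - r ^ 2)) * r ^ m := by
      apply intervalIntegral.integral_mono_on zero_le_one
        (theta_integrand_integrable (m + 1)) (theta_integrand_integrable m)
      intro r hr
      exact mul_le_mul_of_nonneg_left
        (pow_le_pow_of_le_one hr.1 hr.2 (Nat.le_succ m)) (Real.exp_pos _).le
    have hI0 : 0 < ∫ r in (0:ℝ)..1, Real.exp (-1 / (1 - r ^ 2)) * r ^ m :=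
      theta_integral_pos m
    push_cast
    set I1 := ∫ r in (0:ℝ)..1, Real.exp (-1 / (1 - r ^ 2)) * r ^ (m + 1) with hI1def
    set I0 := ∫ r in (0:ℝ)..1, Real.exp (-1 / (1 - r ^ 2)) * r ^ m with hI0def
    nlinarith [mul_le_mul_of_nonneg_left hI (show (0:ℝ) ≤ (m:ℝ)+1+1 by positivity),
      mul_nonneg (show (0:ℝ) ≤ (m:ℝ) by positivity) hI0.le,
      mul_nonneg (mul_nonneg (show (0:ℝ) ≤ (m:ℝ) by positivity) (show (0:ℝ) ≤ (m:ℝ)+1+1 by positivity)) hI0.le]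

/-- Smoothed indicator function. For each compact `K ⊆ ℝ^d` and `δ > 0`,
with `K^{2δ} = {x : ∃ y ∈ K, ‖x-y‖₂ ≤ 2δ}`, there is a `C¹` function `v : ℝ^d → [0,1]` with
`v = 1` on `K`, `v = 0` off `K^{2δ}`, and
`‖∇v(x)‖₂ ≤ (δ⁻¹ d θ_{d-1}/θ_d) · 1{x ∈ K^{2δ} \ K}`. -/
theorem smoothed_indicator {d : ℕ} (K : Set (E d)) (hK : IsCompact K) (δ : ℝ) (hδ : 0 < δ) :
    ∃ v : E d → ℝ, ContDiff ℝ 1 v ∧ (∀ x, v x ∈ Set.Icc (0 : ℝ) 1) ∧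
      (∀ x ∈ K, v x = 1) ∧
      (∀ x, x ∉ {z : E d | ∃ y ∈ K, ‖z - y‖ ≤ 2 * δ} → v x = 0) ∧
      ∀ x, ‖gradient v x‖ ≤ δ⁻¹ * d * theta (d - 1) / theta d *
        Set.indicator ({z : E d | ∃ y ∈ K, ‖z - y‖ ≤ 2 * δ} \ K) (fun _ => (1 : ℝ)) x := by
  set S : Set (E d) := {z : E d | ∃ y ∈ K, ‖z - y‖ ≤ 2 * δ} with hS
  -- basic positivity of the constant
  have hconst : 0 ≤ δ⁻¹ * d * theta (d - 1) / theta d := by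
    have := theta_pos d
    have := theta_pos (d - 1)
    positivity
  rcases K.eq_empty_or_nonempty with hKe | hne
  · -- K empty: take v = 0
    refine ⟨fun _ => 0, contDiff_const, by norm_num, by simp [hKe], fun _ _ => rfl, ?_⟩
    intro x
    have : x ∉ S \ K := by
      rintro ⟨⟨y, hy, -⟩, -⟩
      simp [hKe] at hy
    rw [Set.indicator_of_notMem this, gradient_fun_const]
    simp
  rcases Nat.eq_zero_or_pos d with hd0 | hd1
  · -- dimension 0 : everything is trivial
    subst hd0
    haveI : Subsingleton (E 0) := ⟨fun a b => by ext i; exact i.elim0⟩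
    obtain ⟨y₀, hy₀⟩ := hne
    have hall : ∀ x : E 0, x ∈ K := fun x => (Subsingleton.elim x y₀) ▸ hy₀
    refine ⟨fun _ => 1, contDiff_const, by norm_num, fun _ _ => rfl, ?_, ?_⟩
    · intro x hx
      exact absurd ⟨y₀, hy₀, by
        have : x - y₀ = 0 := Subsingleton.elim _ _
        rw [this, norm_zero]; positivity⟩ hx
    · intro x
      rw [gradient_fun_const]
      simp
  -- main case : d ≥ 1, K nonempty
  -- distance-based cutoff
  set A : E d → ℝ := fun x => (7 * δ / 4 - infDist x K) / (5 * δ / 4) with hA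
  set g : E d → ℝ := fun x => min (max (A x) 0) 1 with hg
  have hc : (0:ℝ) < 5 * δ / 4 := by linarith
  have hg0 : ∀ x, 0 ≤ g x := fun x => le_min (le_max_right _ _) zero_le_one
  have hg1 : ∀ x, g x ≤ 1 := fun x => min_le_right _ _
  have hgone : ∀ x, infDist x K ≤ δ / 2 → g x = 1 := by
    intro x hx
    have h1 : (1:ℝ) ≤ A x := by
      simp only [hA]
      rw [le_div_iff₀ hc]
      linarith
    simp only [hg]
    rw [min_eq_right (le_trans h1 (le_max_left _ _))]
  have hgzero : ∀ x, 7 * δ / 4 ≤ infDist x K → g x = 0 := by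
    intro x hx
    have h1 : A x ≤ 0 := div_nonpos_of_nonpos_of_nonneg (by linarith) hc.le
    simp only [hg]
    rw [max_eq_right h1, min_eq_left zero_le_one]
  have hinf_lip : ∀ x y : E d, |infDist x K - infDist y K| ≤ dist x y := by
    intro x y
    rw [abs_sub_le_iff]
    constructor
    · have := infDist_le_infDist_add_dist (x := x) (y := y) (s := K); linarith
    · have := infDist_le_infDist_add_dist (x := y) (y := x) (s := K)
      rw [dist_comm] at this; linarith
  have hg_lip : ∀ x y : E d, |g x - g y| ≤ (5 * δ / 4)⁻¹ * dist x y := by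
    intro x y
    have h1 : |g x - g y| ≤ |A x - A y| := by
      refine le_trans (abs_min_sub_min_le_max _ _ _ _) ?_
      refine max_le (abs_max_sub_max_le_abs _ _ _) ?_
      simp [abs_nonneg]
    have h2 : |A x - A y| = |infDist x K - infDist y K| / (5 * δ / 4) := by
      simp only [hA, div_sub_div_same]
      rw [abs_div, abs_of_pos hc]
      congr 1
      have : 7 * δ / 4 - infDist x K - (7 * δ / 4 - infDist y K)
          = -(infDist x K - infDist y K) := by ring
      rw [this, abs_neg]
    calc |g x - g y| ≤ |infDist x K - infDist y K| / (5 * δ / 4) := h2 ▸ h1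
      _ ≤ dist x y / (5 * δ / 4) := by
          gcongr
          exact hinf_lip x y
      _ = (5 * δ / 4)⁻¹ * dist x y := by ring
  have hgc : Continuous g := by
    apply Continuous.min _ continuous_const
    apply Continuous.max _ continuous_const
    exact (continuous_const.sub (continuous_infDist_pt K)).div_const _
  -- the bump function
  set φb : ContDiffBump (0 : E d) := ⟨δ/16, δ/8, by positivity, by linarith⟩ with hφb
  set v : E d → ℝ := (φb.normed volume) ⋆[ContinuousLinearMap.lsmul ℝ ℝ, volume] g with hv
  have hvdef : ∀ x, v x = ∫ u, φb.normed volume u • g (x - u) := by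
    intro x; rw [hv, convolution_def]; rfl
  have hInt : ∀ x : E d, Integrable (fun u => φb.normed volume u • g (x - u)) volume := by
    intro x
    apply Continuous.integrable_of_hasCompactSupport
    · exact φb.continuous_normed.smul (hgc.comp (continuous_const.sub continuous_id))
    · exact φb.hasCompactSupport_normed.smul_right
  -- smoothness
  have hsmooth : ContDiff ℝ 1 v :=
    φb.hasCompactSupport_normed.contDiff_convolution_left _ φb.contDiff_normed
      (hgc.locallyIntegrable)
  -- local constancy
  have hveq : ∀ x₀ : E d, (∀ x ∈ ball x₀ (δ/8), g x = g x₀) → v x₀ = g x₀ := by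
    intro x₀ h
    exact φb.normed_convolution_eq_right h
  have hv1 : ∀ x₀ : E d, infDist x₀ K ≤ 3 * δ / 8 → v x₀ = 1 := by
    intro x₀ h
    rw [hveq x₀ ?_, hgone x₀ (by linarith)]
    intro x hx
    rw [mem_ball] at hx
    have : infDist x K ≤ infDist x₀ K + dist x x₀ := infDist_le_infDist_add_dist
    rw [hgone x (by linarith), hgone x₀ (by linarith)]
  have hv0 : ∀ x₀ : E d, 15 * δ / 8 ≤ infDist x₀ K → v x₀ = 0 := by
    intro x₀ h
    rw [hveq x₀ ?_, hgzero x₀ (by linarith)]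
    intro x hx
    rw [mem_ball] at hx
    have : infDist x₀ K ≤ infDist x K + dist x₀ x := infDist_le_infDist_add_dist
    rw [dist_comm] at hx
    rw [hgzero x (by linarith), hgzero x₀ (by linarith)]
  have hnotS : ∀ x : E d, x ∉ S → 2 * δ ≤ infDist x K := by
    intro x hx
    by_contra h
    push_neg at h
    obtain ⟨y, hy, hdy⟩ := (infDist_lt_iff hne).1 h
    exact hx ⟨y, hy, by rw [← dist_eq_norm]; exact hdy.le⟩
  -- values in [0,1]
  have hmem : ∀ x, v x ∈ Set.Icc (0:ℝ) 1 := by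
    intro x
    constructor
    · rw [hvdef]
      exact integral_nonneg fun u => smul_nonneg (φb.nonneg_normed u) (hg0 _)
    · rw [hvdef]
      calc (∫ u, φb.normed volume u • g (x - u)) ≤ ∫ u, φb.normed volume u := by
            apply integral_mono (hInt x) φb.integrable_normed
            intro u
            simpa [smul_eq_mul] using
              mul_le_of_le_one_right (φb.nonneg_normed u) (hg1 (x - u))
        _ = 1 := φb.integral_normed
  -- Lipschitz bound
  have hvlip : LipschitzWith ⟨(5 * δ / 4)⁻¹, by positivity⟩ v := by
    apply LipschitzWith.of_dist_le_mul
    intro x y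
    rw [Real.dist_eq, hvdef, hvdef, ← integral_sub (hInt x) (hInt y)]
    have : ∀ u : E d, φb.normed volume u • g (x - u) - φb.normed volume u • g (y - u)
        = φb.normed volume u • (g (x - u) - g (y - u)) := fun u => (smul_sub _ _ _).symm
    simp_rw [this]
    rw [← Real.norm_eq_abs]
    calc ‖∫ u, φb.normed volume u • (g (x - u) - g (y - u))‖
        ≤ ∫ u, φb.normed volume u * ((5 * δ / 4)⁻¹ * dist x y) := by
          apply norm_integral_le_of_norm_le (φb.integrable_normed.mul_const _)
          filter_upwards with u
          rw [smul_eq_mul, Real.norm_eq_abs, abs_mul, abs_of_nonneg (φb.nonneg_normed u)]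
          apply mul_le_mul_of_nonneg_left _ (φb.nonneg_normed u)
          have := hg_lip (x - u) (y - u)
          have hd : dist (x - u) (y - u) = dist x y := by
            rw [dist_eq_norm, dist_eq_norm, sub_sub_sub_cancel_right]
          rwa [hd] at this
      _ = ((5 * δ / 4)⁻¹ * dist x y) := by
          rw [integral_mul_const, φb.integral_normed, one_mul]
      _ = ↑(⟨(5 * δ / 4)⁻¹, by positivity⟩ : NNReal) * dist x y := rfl
  have hfd : ∀ x, ‖fderiv ℝ v x‖ ≤ (5 * δ / 4)⁻¹ := fun x =>
    norm_fderiv_le_of_lipschitz ℝ hvlip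
  have hgradnorm : ∀ x, ‖gradient v x‖ = ‖fderiv ℝ v x‖ := by
    intro x
    rw [gradient]
    exact LinearIsometryEquiv.norm_map _ _
  -- v = 1 on K, and gradient vanishes there
  have hK1 : ∀ x ∈ K, v x = 1 := fun x hx =>
    hv1 x (by rw [infDist_zero_of_mem hx]; positivity)
  have hgradK : ∀ x ∈ K, gradient v x = 0 := by
    intro x hx
    have hev : v =ᶠ[nhds x] fun _ => (1:ℝ) := by
      filter_upwards [Metric.ball_mem_nhds x (show (0:ℝ) < 3*δ/8 by linarith)] with z hz
      refine hv1 z ?_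
      rw [mem_ball] at hz
      calc infDist z K ≤ dist z x := infDist_le_dist_of_mem hx
        _ ≤ 3 * δ / 8 := hz.le
    rw [hev.gradient_eq, gradient_fun_const]
  -- v = 0 off S, and gradient vanishes there
  have hS0 : ∀ x, x ∉ S → v x = 0 := fun x hx => hv0 x (by linarith [hnotS x hx])
  have hgradS : ∀ x, x ∉ S → gradient v x = 0 := by
    intro x hx
    have h2 := hnotS x hx
    have hev : v =ᶠ[nhds x] fun _ => (0:ℝ) := by
      filter_upwards [Metric.ball_mem_nhds x (show (0:ℝ) < δ/16 by linarith)] with z hz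
      refine hv0 z ?_
      rw [mem_ball] at hz
      have : infDist x K ≤ infDist z K + dist x z := infDist_le_infDist_add_dist
      rw [dist_comm] at hz
      linarith
    rw [hev.gradient_eq, gradient_fun_const]
  refine ⟨v, hsmooth, hmem, hK1, hS0, ?_⟩
  intro x
  by_cases hxK : x ∈ K
  · rw [hgradK x hxK, Set.indicator_of_notMem (fun h => h.2 hxK)]
    simp
  by_cases hxS : x ∈ S
  · rw [Set.indicator_of_mem (show x ∈ S \ K from ⟨hxS, hxK⟩)]
    have h1 : (5 * δ / 4)⁻¹ ≤ δ⁻¹ := by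
      apply inv_anti₀ hδ; linarith
    have h2 : (1:ℝ) ≤ (d : ℝ) * theta (d - 1) / theta d := by
      rw [le_div_iff₀ (theta_pos d), one_mul]
      exact theta_le d hd1
    calc ‖gradient v x‖ ≤ (5 * δ / 4)⁻¹ := by rw [hgradnorm x]; exact hfd x
      _ ≤ δ⁻¹ := h1
      _ ≤ δ⁻¹ * ((d : ℝ) * theta (d - 1) / theta d) := by
          nth_rewrite 1 [← mul_one δ⁻¹]
          exact mul_le_mul_of_nonneg_left h2 (by positivity)
      _ = δ⁻¹ * d * theta (d - 1) / theta d * 1 := by ring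
  · rw [hgradS x hxS, Set.indicator_of_notMem (fun h => hxS h.1)]
    simp
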